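/- Under the decomposition C(r) = C(r*) + C₁(v) + C₂(v) - K(v) + 2C₁(r*,v) + 2C₂(r*,v) with v = r - r*, if r* satisfies the first-order condition with multiplier λ and ∫_0^T v_t dt = 0, then ℓ(r*,v) := 2C₁(r*,v) + 2C₂(r*,v) - K(v) = 0, hence C(r) = C(r*) + C₁(v) + C₂(v) ≥ C(r*), with equality iff v = 0 a.e. -/

import Mathlib

open MeasureTheory
set_option maxHeartbeats 1000000

lemma primCont (T : ℝ) (hT : 0 ≤ T) (f : ℝ → ℝ) (hf : IntervalIntegrable f volume 0 T) :
    ContinuousOn (fun t => ∫ s in (0:ℝ)..t, f s) (Set.Icc 0 T) := by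
  have huIcc : Set.uIcc (0:ℝ) T = Set.Icc 0 T := Set.uIcc_of_le hT
  rw [← huIcc]
  apply intervalIntegral.continuousOn_primitive_interval
  exact (intervalIntegrable_iff_integrableOn_Icc_of_le hT).mp hf |>.congr_set_ae
    (by rw [huIcc]; exact Filter.EventuallyEq.rfl)

lemma prodInt (T : ℝ) (hT : 0 ≤ T) (f g : ℝ → ℝ) (hf : ContinuousOn f (Set.Icc 0 T))
    (hg : IntervalIntegrable g volume 0 T) :
    IntervalIntegrable (fun t => f t * g t) volume 0 T :=
  hg.continuousOn_mul (by rwa [Set.uIcc_of_le hT])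

lemma parts_key (T : ℝ) (hT : 0 ≤ T) (g v : ℝ → ℝ)
    (hg : ContinuousOn g (Set.Icc 0 T)) (hv : IntervalIntegrable v volume 0 T) :
    (∫ t in (0:ℝ)..T, g t * (∫ s in (0:ℝ)..t, v s))
      = (∫ t in (0:ℝ)..T, g t) * (∫ s in (0:ℝ)..T, v s)
        - ∫ s in (0:ℝ)..T, (∫ t in (0:ℝ)..s, g t) * v s := by
  have huIcc : Set.uIcc (0:ℝ) T = Set.Icc 0 T := Set.uIcc_of_le hT
  have hgi : IntervalIntegrable g volume 0 T := by
    apply ContinuousOn.intervalIntegrable; rwa [huIcc]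
  set μ := volume.restrict (Set.Ioc (0:ℝ) T) with hμ
  have hgI : Integrable g μ := (intervalIntegrable_iff_integrableOn_Ioc_of_le hT).mp hgi
  have hvI : Integrable v μ := (intervalIntegrable_iff_integrableOn_Ioc_of_le hT).mp hv
  have hprod : Integrable (fun p : ℝ × ℝ => g p.1 * v p.2) (μ.prod μ) :=
    hgI.mul_prod hvI
  set f : ℝ → ℝ → ℝ := fun t s => if s ≤ t then g t * v s else 0 with hf
  have hFind : (Function.uncurry f) = Set.indicator {p : ℝ × ℝ | p.2 ≤ p.1}
      (fun p => g p.1 * v p.2) := by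
    ext p
    simp [Function.uncurry, hf, Set.indicator_apply, Set.mem_setOf_eq]
  have hmeas : MeasurableSet {p : ℝ × ℝ | p.2 ≤ p.1} :=
    measurableSet_le measurable_snd measurable_fst
  have hF : Integrable (Function.uncurry f) (μ.prod μ) := by
    rw [hFind]; exact hprod.indicator hmeas
  have hswap := MeasureTheory.integral_integral_swap hF
  -- LHS computation
  have hL : (∫ t, (∫ s, f t s ∂μ) ∂μ) = ∫ t in (0:ℝ)..T, g t * (∫ s in (0:ℝ)..t, v s) := by
    rw [intervalIntegral.integral_of_le hT]
    apply setIntegral_congr_fun measurableSet_Ioc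
    intro t ht
    dsimp only
    have heq : (fun s => f t s) = Set.indicator (Set.Iic t) (fun s => g t * v s) := by
      ext s; simp [hf, Set.indicator_apply]
    rw [heq, integral_indicator measurableSet_Iic, hμ,
      Measure.restrict_restrict measurableSet_Iic]
    have hset : Set.Iic t ∩ Set.Ioc 0 T = Set.Ioc 0 t := by
      ext s
      simp only [Set.mem_inter_iff, Set.mem_Iic, Set.mem_Ioc]
      constructor
      · rintro ⟨h1, h2, h3⟩; exact ⟨h2, h1⟩
      · rintro ⟨h1, h2⟩; exact ⟨h2, h1, h2.trans ht.2⟩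
    rw [hset, integral_const_mul, intervalIntegral.integral_of_le ht.1.le]
  -- RHS computation
  have hR : (∫ s, (∫ t, f t s ∂μ) ∂μ)
      = (∫ t in (0:ℝ)..T, g t) * (∫ s in (0:ℝ)..T, v s)
        - ∫ s in (0:ℝ)..T, (∫ t in (0:ℝ)..s, g t) * v s := by
    have step1 : (∫ s, (∫ t, f t s ∂μ) ∂μ)
        = ∫ s in (0:ℝ)..T, ((∫ t in (0:ℝ)..T, g t) - (∫ t in (0:ℝ)..s, g t)) * v s := by
      rw [intervalIntegral.integral_of_le hT]
      apply setIntegral_congr_fun measurableSet_Ioc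
      intro s hs
      dsimp only
      have heq : (fun t => f t s) = Set.indicator (Set.Ici s) (fun t => g t * v s) := by
        ext t; simp [hf, Set.indicator_apply]
      rw [heq, integral_indicator measurableSet_Ici, hμ,
        Measure.restrict_restrict measurableSet_Ici]
      have hset : Set.Ici s ∩ Set.Ioc 0 T = Set.Icc s T := by
        ext t
        simp only [Set.mem_inter_iff, Set.mem_Ici, Set.mem_Ioc, Set.mem_Icc]
        constructor
        · rintro ⟨h1, h2, h3⟩; exact ⟨h1, h3⟩
        · rintro ⟨h1, h2⟩; exact ⟨h1, hs.1.trans_le h1, h2⟩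
      have hsg : IntervalIntegrable g volume 0 s :=
        hgi.mono_set (by rw [huIcc]; exact Set.uIcc_subset_Icc ⟨le_refl _, hT⟩ ⟨hs.1.le, hs.2⟩)
      have hsub : (∫ t in s..T, g t) = (∫ t in (0:ℝ)..T, g t) - ∫ t in (0:ℝ)..s, g t :=
        (intervalIntegral.integral_interval_sub_left hgi hsg).symm
      rw [hset, integral_Icc_eq_integral_Ioc, integral_mul_const,
        ← intervalIntegral.integral_of_le hs.2, hsub]
    rw [step1]
    have h1 : IntervalIntegrable (fun s => (∫ t in (0:ℝ)..T, g t) * v s) volume 0 T :=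
      hv.const_mul _
    have hGcont : ContinuousOn (fun s => ∫ t in (0:ℝ)..s, g t) (Set.uIcc 0 T) := by
      apply intervalIntegral.continuousOn_primitive_interval
      exact (intervalIntegrable_iff_integrableOn_Icc_of_le hT).mp hgi |>.congr_set_ae
        (by rw [huIcc]; exact Filter.EventuallyEq.rfl)
    have h2 : IntervalIntegrable (fun s => (∫ t in (0:ℝ)..s, g t) * v s) volume 0 T :=
      hv.continuousOn_mul hGcont
    have hsplit : (∫ s in (0:ℝ)..T, ((∫ t in (0:ℝ)..T, g t) - (∫ t in (0:ℝ)..s, g t)) * v s)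
        = (∫ s in (0:ℝ)..T, (∫ t in (0:ℝ)..T, g t) * v s)
          - ∫ s in (0:ℝ)..T, (∫ t in (0:ℝ)..s, g t) * v s := by
      rw [← intervalIntegral.integral_sub h1 h2]
      congr 1; ext s; ring
    rw [hsplit, intervalIntegral.integral_const_mul]
  rw [← hL, hswap, hR]

/-- The cost functional of the static optimal execution problem. -/
noncomputable def execCost (κ φ T x : ℝ) (m r : ℝ → ℝ) : ℝ :=
  κ * (∫ t in (0:ℝ)..T, (r t) ^ 2)
    + φ * (∫ t in (0:ℝ)..T, (x - ∫ s in (0:ℝ)..t, r s) ^ 2)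
    - ∫ t in (0:ℝ)..T, (∫ s in (0:ℝ)..t, m s) * r t

theorem stmt17 (κ φ T x : ℝ) (hκ : 0 < κ) (hφ : 0 < φ) (hT : 0 < T) (hx : 0 < x)
    (m : ℝ → ℝ) (hm : IntervalIntegrable m volume 0 T)
    (rstar v : ℝ → ℝ)
    (hrstar : IntervalIntegrable rstar volume 0 T)
    (hrstar2 : IntervalIntegrable (fun t => (rstar t) ^ 2) volume 0 T)
    (hv : IntervalIntegrable v volume 0 T)
    (hv2 : IntervalIntegrable (fun t => (v t) ^ 2) volume 0 T)
    (hvzero : (∫ t in (0:ℝ)..T, v t) = 0)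
    (lam : ℝ)
    (hFOC : ∀ t ∈ Set.Icc (0:ℝ) T,
      2 * κ * rstar t
        + 2 * φ * (∫ s in (0:ℝ)..t, (x - ∫ u in (0:ℝ)..s, rstar u))
        - (∫ s in (0:ℝ)..t, m s) = lam) :
    (2 * (κ * ∫ t in (0:ℝ)..T, rstar t * v t)
        + 2 * (φ * ∫ t in (0:ℝ)..T,
            (x - ∫ s in (0:ℝ)..t, rstar s) * (-(∫ s in (0:ℝ)..t, v s)))
        - (∫ t in (0:ℝ)..T, (∫ s in (0:ℝ)..t, m s) * v t) = 0) ∧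
    execCost κ φ T x m (fun t => rstar t + v t)
      = execCost κ φ T x m rstar
        + κ * (∫ t in (0:ℝ)..T, (v t) ^ 2)
        + φ * (∫ t in (0:ℝ)..T, (∫ s in (0:ℝ)..t, v s) ^ 2) ∧
    execCost κ φ T x m rstar ≤ execCost κ φ T x m (fun t => rstar t + v t) ∧
    (execCost κ φ T x m (fun t => rstar t + v t) = execCost κ φ T x m rstar ↔
      ∀ᵐ t ∂(volume.restrict (Set.Ioc (0:ℝ) T)), v t = 0) := by
  have hT' : (0:ℝ) ≤ T := hT.le
  have huIcc : Set.uIcc (0:ℝ) T = Set.Icc 0 T := Set.uIcc_of_le hT'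
  -- continuity of primitives
  have hMc : ContinuousOn (fun t => ∫ s in (0:ℝ)..t, m s) (Set.Icc 0 T) :=
    primCont T hT' m hm
  have hAc : ContinuousOn (fun t => ∫ s in (0:ℝ)..t, rstar s) (Set.Icc 0 T) :=
    primCont T hT' rstar hrstar
  have hBc : ContinuousOn (fun t => ∫ s in (0:ℝ)..t, v s) (Set.Icc 0 T) :=
    primCont T hT' v hv
  have hgc : ContinuousOn (fun t => x - ∫ s in (0:ℝ)..t, rstar s) (Set.Icc 0 T) :=
    continuousOn_const.sub hAc
  have hgint : IntervalIntegrable (fun t => x - ∫ s in (0:ℝ)..t, rstar s) volume 0 T :=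
    ContinuousOn.intervalIntegrable (by rwa [huIcc])
  have hGc : ContinuousOn (fun t => ∫ s in (0:ℝ)..t, (x - ∫ u in (0:ℝ)..s, rstar u))
      (Set.Icc 0 T) := primCont T hT' _ hgint
  -- integrabilities
  have hMv : IntervalIntegrable (fun t => (∫ s in (0:ℝ)..t, m s) * v t) volume 0 T :=
    prodInt T hT' _ v hMc hv
  have hGv : IntervalIntegrable
      (fun t => (∫ s in (0:ℝ)..t, (x - ∫ u in (0:ℝ)..s, rstar u)) * v t) volume 0 T :=
    prodInt T hT' _ v hGc hv
  have hMr : IntervalIntegrable (fun t => (∫ s in (0:ℝ)..t, m s) * rstar t) volume 0 T :=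
    prodInt T hT' _ rstar hMc hrstar
  have hrv : IntervalIntegrable (fun t => rstar t * v t) volume 0 T := by
    apply IntervalIntegrable.mono_fun ((hrstar2.add hv2).const_mul (1/2))
    · rw [Set.uIoc_of_le hT']
      exact hrstar.1.aestronglyMeasurable.mul hv.1.aestronglyMeasurable
    · apply Filter.Eventually.of_forall
      intro t
      simp only [Real.norm_eq_abs]
      have h1 : |rstar t * v t| ≤ (1/2) * ((rstar t)^2 + (v t)^2) := by
        rw [abs_mul]
        nlinarith [sq_nonneg (|rstar t| - |v t|), sq_abs (rstar t), sq_abs (v t)]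
      exact h1.trans (le_abs_self _)
  have hgB : IntervalIntegrable
      (fun t => (x - ∫ s in (0:ℝ)..t, rstar s) * (-(∫ s in (0:ℝ)..t, v s))) volume 0 T :=
    ContinuousOn.intervalIntegrable (by rw [huIcc]; exact hgc.mul hBc.neg)
  have hB2 : IntervalIntegrable (fun t => (∫ s in (0:ℝ)..t, v s)^2) volume 0 T :=
    ContinuousOn.intervalIntegrable (by rw [huIcc]; exact hBc.pow 2)
  have hg2 : IntervalIntegrable (fun t => (x - ∫ s in (0:ℝ)..t, rstar s)^2) volume 0 T :=
    ContinuousOn.intervalIntegrable (by rw [huIcc]; exact hgc.pow 2)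
  -- Part 1 : first-order condition kills the cross terms
  have part1 : 2 * (κ * ∫ t in (0:ℝ)..T, rstar t * v t)
        + 2 * (φ * ∫ t in (0:ℝ)..T,
            (x - ∫ s in (0:ℝ)..t, rstar s) * (-(∫ s in (0:ℝ)..t, v s)))
        - (∫ t in (0:ℝ)..T, (∫ s in (0:ℝ)..t, m s) * v t) = 0 := by
    -- rewrite rstar via the FOC
    have e1 : (∫ t in (0:ℝ)..T, rstar t * v t)
        = ∫ t in (0:ℝ)..T,
            ((1/(2*κ)) * (lam * v t + ((∫ s in (0:ℝ)..t, m s) * v t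
              - 2*φ*((∫ s in (0:ℝ)..t, (x - ∫ u in (0:ℝ)..s, rstar u)) * v t)))) := by
      apply intervalIntegral.integral_congr
      intro t ht
      rw [huIcc] at ht
      have h := hFOC t ht
      dsimp only
      rw [← h]
      field_simp
      ring
    have e2 : (∫ t in (0:ℝ)..T, rstar t * v t)
        = (1/(2*κ)) * ((∫ t in (0:ℝ)..T, (∫ s in (0:ℝ)..t, m s) * v t)
            - 2*φ*(∫ t in (0:ℝ)..T,
              (∫ s in (0:ℝ)..t, (x - ∫ u in (0:ℝ)..s, rstar u)) * v t)) := by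
      rw [e1, intervalIntegral.integral_const_mul,
        intervalIntegral.integral_add (hv.const_mul lam) (hMv.sub (hGv.const_mul (2*φ))),
        intervalIntegral.integral_const_mul,
        intervalIntegral.integral_sub hMv (hGv.const_mul (2*φ)),
        intervalIntegral.integral_const_mul, hvzero]
      ring
    -- integration by parts via Fubini
    have hpk := parts_key T hT' (fun t => x - ∫ s in (0:ℝ)..t, rstar s) v hgc hv
    rw [hvzero, mul_zero] at hpk
    have e3 : (∫ t in (0:ℝ)..T,
          (x - ∫ s in (0:ℝ)..t, rstar s) * (-(∫ s in (0:ℝ)..t, v s)))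
        = ∫ t in (0:ℝ)..T, (∫ s in (0:ℝ)..t, (x - ∫ u in (0:ℝ)..s, rstar u)) * v t := by
      have : (∫ t in (0:ℝ)..T,
          (x - ∫ s in (0:ℝ)..t, rstar s) * (-(∫ s in (0:ℝ)..t, v s)))
        = - ∫ t in (0:ℝ)..T, (x - ∫ s in (0:ℝ)..t, rstar s) * (∫ s in (0:ℝ)..t, v s) := by
        rw [← intervalIntegral.integral_neg]
        congr 1; ext t; ring
      rw [this, hpk]; ring
    rw [e2, e3]
    field_simp
    ring
  -- Part 2 : expansion of the cost
  have part2 : execCost κ φ T x m (fun t => rstar t + v t)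
      = execCost κ φ T x m rstar
        + κ * (∫ t in (0:ℝ)..T, (v t) ^ 2)
        + φ * (∫ t in (0:ℝ)..T, (∫ s in (0:ℝ)..t, v s) ^ 2) := by
    have ea : (∫ t in (0:ℝ)..T, (rstar t + v t)^2)
        = (∫ t in (0:ℝ)..T, (rstar t)^2) + (2 * ∫ t in (0:ℝ)..T, rstar t * v t)
          + ∫ t in (0:ℝ)..T, (v t)^2 := by
      have : (∫ t in (0:ℝ)..T, (rstar t + v t)^2)
          = ∫ t in (0:ℝ)..T, ((rstar t)^2 + (2*(rstar t * v t) + (v t)^2)) := by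
        apply intervalIntegral.integral_congr; intro t _; ring
      rw [this, intervalIntegral.integral_add hrstar2 ((hrv.const_mul 2).add hv2),
        intervalIntegral.integral_add (hrv.const_mul 2) hv2,
        intervalIntegral.integral_const_mul]
      ring
    have eb : (∫ t in (0:ℝ)..T, (x - ∫ s in (0:ℝ)..t, (rstar s + v s))^2)
        = (∫ t in (0:ℝ)..T, (x - ∫ s in (0:ℝ)..t, rstar s)^2)
          + (2 * ∫ t in (0:ℝ)..T,
              (x - ∫ s in (0:ℝ)..t, rstar s) * (-(∫ s in (0:ℝ)..t, v s)))
          + ∫ t in (0:ℝ)..T, (∫ s in (0:ℝ)..t, v s)^2 := by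
      have hstep : (∫ t in (0:ℝ)..T, (x - ∫ s in (0:ℝ)..t, (rstar s + v s))^2)
          = ∫ t in (0:ℝ)..T, ((x - ∫ s in (0:ℝ)..t, rstar s)^2
              + (2*((x - ∫ s in (0:ℝ)..t, rstar s) * (-(∫ s in (0:ℝ)..t, v s)))
                + (∫ s in (0:ℝ)..t, v s)^2)) := by
        apply intervalIntegral.integral_congr
        intro t ht
        rw [huIcc] at ht
        dsimp only
        have hsub : Set.uIcc (0:ℝ) t ⊆ Set.uIcc (0:ℝ) T := by
          rw [huIcc]; exact Set.uIcc_subset_Icc ⟨le_refl _, hT'⟩ ⟨ht.1, ht.2⟩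
        rw [intervalIntegral.integral_add (hrstar.mono_set hsub) (hv.mono_set hsub)]
        ring
      rw [hstep,
        intervalIntegral.integral_add hg2 ((hgB.const_mul 2).add hB2),
        intervalIntegral.integral_add (hgB.const_mul 2) hB2,
        intervalIntegral.integral_const_mul]
      ring
    have ec : (∫ t in (0:ℝ)..T, (∫ s in (0:ℝ)..t, m s) * (rstar t + v t))
        = (∫ t in (0:ℝ)..T, (∫ s in (0:ℝ)..t, m s) * rstar t)
          + ∫ t in (0:ℝ)..T, (∫ s in (0:ℝ)..t, m s) * v t := by
      have : (∫ t in (0:ℝ)..T, (∫ s in (0:ℝ)..t, m s) * (rstar t + v t))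
          = ∫ t in (0:ℝ)..T, ((∫ s in (0:ℝ)..t, m s) * rstar t
              + (∫ s in (0:ℝ)..t, m s) * v t) := by
        apply intervalIntegral.integral_congr; intro t _; ring
      rw [this, intervalIntegral.integral_add hMr hMv]
    simp only [execCost]
    rw [ea, eb, ec]
    nlinarith [part1]
  -- Part 3 : optimality
  have hI3 : (0:ℝ) ≤ ∫ t in (0:ℝ)..T, (v t)^2 :=
    intervalIntegral.integral_nonneg hT' (fun t _ => sq_nonneg _)
  have hJ3 : (0:ℝ) ≤ ∫ t in (0:ℝ)..T, (∫ s in (0:ℝ)..t, v s)^2 :=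
    intervalIntegral.integral_nonneg hT' (fun t _ => sq_nonneg _)
  have part3 : execCost κ φ T x m rstar ≤ execCost κ φ T x m (fun t => rstar t + v t) := by
    rw [part2]
    nlinarith
  refine ⟨part1, part2, part3, ?_⟩
  constructor
  · intro heq
    have hzero : κ * (∫ t in (0:ℝ)..T, (v t)^2)
        + φ * (∫ t in (0:ℝ)..T, (∫ s in (0:ℝ)..t, v s)^2) = 0 := by
      rw [part2] at heq; linarith
    have hI3z : (∫ t in (0:ℝ)..T, (v t)^2) = 0 := by nlinarith
    rw [intervalIntegral.integral_of_le hT'] at hI3z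
    have hint : IntegrableOn (fun t => (v t)^2) (Set.Ioc 0 T) volume := hv2.1
    have := (integral_eq_zero_iff_of_nonneg_ae
      (Filter.Eventually.of_forall (fun t => sq_nonneg (v t))) hint).mp hI3z
    filter_upwards [this] with t ht
    exact (pow_eq_zero_iff two_ne_zero).mp ht
  · intro hz
    have hI3z : (∫ t in (0:ℝ)..T, (v t)^2) = 0 := by
      rw [intervalIntegral.integral_of_le hT']
      apply integral_eq_zero_of_ae
      filter_upwards [hz] with t ht
      simp [ht]
    have hBz : ∀ t ∈ Set.uIcc (0:ℝ) T, (∫ s in (0:ℝ)..t, v s)^2 = 0 := by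
      intro t ht
      rw [huIcc] at ht
      have hsub : Set.Ioc (0:ℝ) t ⊆ Set.Ioc 0 T := Set.Ioc_subset_Ioc_right ht.2
      have hzt : ∀ᵐ s ∂(volume.restrict (Set.Ioc (0:ℝ) t)), v s = 0 :=
        ae_restrict_of_ae_restrict_of_subset hsub hz
      have : (∫ s in (0:ℝ)..t, v s) = 0 := by
        rw [intervalIntegral.integral_of_le ht.1]
        apply integral_eq_zero_of_ae
        filter_upwards [hzt] with s hs using hs
      rw [this]; ring
    have hJ3z : (∫ t in (0:ℝ)..T, (∫ s in (0:ℝ)..t, v s)^2) = 0 := by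
      rw [intervalIntegral.integral_congr hBz, intervalIntegral.integral_zero]
    rw [part2, hI3z, hJ3z]
    ring
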